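/- Let 1 ≤ p₂ < p₁ ≤ u₁ < ∞ and p₂ ≤ u₂ < ∞ with p₁/u₁ > p₂/u₂, and let j ∈ ℕ. Set ν₀ = min{ν ∈ ℕ : 2^{νd} ≥ 2^{jd p₂/u₂}} and let ℰ be the family of all sequences ε = (ε_k)_{k ∈ 𝒦_j} with ε_k ∈ {−1,0,1} such that for every dyadic cube Q_{−ν₀,m} ⊆ Q_{−j,0} there is exactly one k ∈ 𝒦_j with Q_{0,k} ⊆ Q_{−ν₀,m} and ε_k ≠ 0. Then there is a constant c > 0, independent of j, such that for every ε ∈ ℰ and every λ ∈ ℂ^{𝒦_j}: |∑_{k ∈ 𝒦_j} ε_k λ_k| ≤ c · 2^{−ν₀ d} · 2^{jd(1 − 1/u₁ + p₂/(u₂ p₁))} · ‖λ | m^{2^{jd}}_{u₁,p₁}‖. -/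

import Mathlib

/-- The index set `𝒦_j = {k ∈ ℤ^d : Q_{0,k} ⊆ Q_{-j,0}}`, identified with
`(Fin d → Fin (2^j))` (the unit cubes inside the cube `[0, 2^j)^d`). -/
abbrev MorreyIdx (d j : ℕ) := Fin d → Fin (2 ^ j)

/-- `Q_{0,k} ⊆ Q_{-ν,m}` for a dyadic cube `Q_{-ν,m} ⊆ Q_{-j,0}` of side length `2^ν`,
where the cube is encoded by `m : Fin d → Fin (2^(j-ν))`: the condition is
`k i / 2^ν = m i` for all `i`. -/
def memSubcube {d j : ℕ} (ν : ℕ) (m : Fin d → ℕ) (k : MorreyIdx d j) : Prop :=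
  ∀ i, (k i : ℕ) / 2 ^ ν = m i

instance {d j : ℕ} (ν : ℕ) (m : Fin d → ℕ) (k : MorreyIdx d j) :
    Decidable (memSubcube ν m k) := by unfold memSubcube; infer_instance

/-- The norm of the finite-dimensional Morrey sequence space `m^{2^{jd}}_{u,p}`:
`‖λ‖ = max_{ν ≤ j, Q_{-ν,m} ⊆ Q_{-j,0}} |Q_{-ν,m}|^{1/u - 1/p}
   (∑_{k : Q_{0,k} ⊆ Q_{-ν,m}} |λ_k|^p)^{1/p}`, with `|Q_{-ν,m}| = 2^{νd}`. -/
noncomputable def morreyNorm (d j : ℕ) (u p : ℝ) (lam : MorreyIdx d j → ℂ) : ℝ :=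
  ⨆ ν : Fin (j + 1), ⨆ m : Fin d → Fin (2 ^ (j - (ν : ℕ))),
    (2 : ℝ) ^ ((((ν : ℕ) * d : ℕ) : ℝ) * (1 / u - 1 / p)) *
      (∑ k : MorreyIdx d j,
        if memSubcube (ν : ℕ) (fun i => (m i : ℕ)) k then ‖lam k‖ ^ p else 0) ^ (1 / p)

/-- The sup-norm on `ℂ^{𝒦_j}`, i.e. the norm of `ℓ∞^{2^{jd}}`. -/
noncomputable def supNorm (d j : ℕ) (lam : MorreyIdx d j → ℂ) : ℝ :=
  ⨆ k : MorreyIdx d j, ‖lam k‖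

/-- The operator norm of the identity map `(ℂ^{𝒦_j}, N₁) → (ℂ^{𝒦_j}, N₂)`. -/
noncomputable def idNorm (d j : ℕ) (N₁ N₂ : (MorreyIdx d j → ℂ) → ℝ) : ℝ :=
  sInf {C : ℝ | 0 ≤ C ∧ ∀ lam : MorreyIdx d j → ℂ, N₂ lam ≤ C * N₁ lam}

/-- The family `ℰ`: sequences `ε` with `ε_k ∈ {-1,0,1}` such that for every dyadic cube
`Q_{-ν₀,m} ⊆ Q_{-j,0}` (encoded by `m : Fin d → Fin (2^(j-ν₀))`) there is exactly one
`k ∈ 𝒦_j` with `Q_{0,k} ⊆ Q_{-ν₀,m}` and `ε_k ≠ 0`. -/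
def memE (d j ν₀ : ℕ) (ε : MorreyIdx d j → ℂ) : Prop :=
  (∀ k, ε k = -1 ∨ ε k = 0 ∨ ε k = 1) ∧
  ∀ m : Fin d → Fin (2 ^ (j - ν₀)), ∃! k : MorreyIdx d j,
    memSubcube ν₀ (fun i => (m i : ℕ)) k ∧ ε k ≠ 0

/-- for `1 ≤ p₂ < p₁ ≤ u₁ < ∞`, `p₂ ≤ u₂ < ∞` with `p₁/u₁ > p₂/u₂`,
there is `c > 0` independent of `j` such that for all `j ≥ 1`, with
`ν₀ = min{ν ∈ ℕ : 2^{νd} ≥ 2^{jd p₂/u₂}}`, every `ε ∈ ℰ` and every `λ ∈ ℂ^{𝒦_j}`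
satisfy `|∑_k ε_k λ_k| ≤ c 2^{-ν₀ d} 2^{jd(1 - 1/u₁ + p₂/(u₂ p₁))} ‖λ | m^{2^{jd}}_{u₁,p₁}‖`. -/
theorem stmt16 (d : ℕ) (hd : 0 < d) (p₁ u₁ p₂ u₂ : ℝ)
    (hp₂ : 1 ≤ p₂) (hp : p₂ < p₁) (hpu₁ : p₁ ≤ u₁) (hpu₂ : p₂ ≤ u₂)
    (hratio : p₂ / u₂ < p₁ / u₁) :
    ∃ c : ℝ, 0 < c ∧ ∀ j : ℕ, 1 ≤ j → ∀ ν₀ : ℕ,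
      IsLeast {ν : ℕ | 1 ≤ ν ∧
        (2 : ℝ) ^ (((ν * d : ℕ) : ℝ)) ≥ (2 : ℝ) ^ (((j * d : ℕ) : ℝ) * p₂ / u₂)} ν₀ →
      ∀ ε : MorreyIdx d j → ℂ, memE d j ν₀ ε →
      ∀ lam : MorreyIdx d j → ℂ,
        ‖∑ k, ε k * lam k‖ ≤
          c * (2 : ℝ) ^ (-(((ν₀ * d : ℕ) : ℝ))) *
            (2 : ℝ) ^ (((j * d : ℕ) : ℝ) * (1 - 1 / u₁ + p₂ / (u₂ * p₁))) *
            morreyNorm d j u₁ p₁ lam := by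
  classical
  have hp₁ : (1:ℝ) < p₁ := lt_of_le_of_lt hp₂ hp
  have hp₁pos : (0:ℝ) < p₁ := by linarith
  have hu₁pos : (0:ℝ) < u₁ := by linarith
  have hu₂pos : (0:ℝ) < u₂ := by linarith
  refine ⟨(2:ℝ) ^ ((d:ℝ)/p₁), Real.rpow_pos_of_pos two_pos _, ?_⟩
  intro j hj ν₀ hν₀ ε hε lam
  -- ν₀ ≤ j
  have hjmem : j ∈ {ν : ℕ | 1 ≤ ν ∧
      (2 : ℝ) ^ (((ν * d : ℕ) : ℝ)) ≥ (2 : ℝ) ^ (((j * d : ℕ) : ℝ) * p₂ / u₂)} := by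
    refine ⟨hj, ?_⟩
    apply Real.rpow_le_rpow_of_exponent_le one_le_two
    rw [div_le_iff₀ hu₂pos]
    have hjd : (0:ℝ) ≤ ((j * d : ℕ) : ℝ) := Nat.cast_nonneg _
    nlinarith
  have hν₀j : ν₀ ≤ j := hν₀.2 hjmem
  -- ν₀ d ≤ j d p₂/u₂ + d
  have hN : ((ν₀ * d : ℕ) : ℝ) ≤ ((j * d : ℕ) : ℝ) * p₂ / u₂ + d := by
    have h1 : 1 ≤ ν₀ := hν₀.1.1
    rcases eq_or_lt_of_le h1 with h1' | h1'
    · have hjd : (0:ℝ) ≤ ((j * d : ℕ) : ℝ) * p₂ / u₂ := by positivity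
      rw [← h1']
      push_cast at hjd ⊢
      linarith
    · -- ν₀ ≥ 2 : ν₀ - 1 not in the set
      have hnot : ν₀ - 1 ∉ {ν : ℕ | 1 ≤ ν ∧
          (2 : ℝ) ^ (((ν * d : ℕ) : ℝ)) ≥ (2 : ℝ) ^ (((j * d : ℕ) : ℝ) * p₂ / u₂)} := by
        intro hmem
        have := hν₀.2 hmem
        omega
      have h2 : ¬ ((2 : ℝ) ^ ((((ν₀-1) * d : ℕ) : ℝ)) ≥
          (2 : ℝ) ^ (((j * d : ℕ) : ℝ) * p₂ / u₂)) := by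
        intro hge
        exact hnot ⟨by omega, hge⟩
      push_neg at h2
      have hlt : ((((ν₀-1) * d : ℕ)) : ℝ) < ((j * d : ℕ) : ℝ) * p₂ / u₂ :=
        (Real.rpow_lt_rpow_left_iff one_lt_two).mp h2
      have hc : ((((ν₀-1) * d : ℕ)) : ℝ) = ((ν₀ * d : ℕ) : ℝ) - d := by
        have : ν₀ * d = (ν₀ - 1) * d + d := by
          cases ν₀ with
          | zero => omega
          | succ n => simp [Nat.succ_mul]
        rw [this]; push_cast; ring
      linarith [hc ▸ hlt]
  -- the support set
  set S : Finset (MorreyIdx d j) := Finset.univ.filter (fun k => ε k ≠ 0) with hS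
  -- Step 1
  have step1 : ‖∑ k, ε k * lam k‖ ≤ ∑ k ∈ S, ‖lam k‖ := by
    have hsum : ∑ k ∈ S, ε k * lam k = ∑ k, ε k * lam k := by
      apply Finset.sum_filter_of_ne
      intro k _ hk h0
      exact hk (by rw [h0, zero_mul])
    rw [← hsum]
    refine le_trans (norm_sum_le _ _) (Finset.sum_le_sum ?_)
    intro k hk
    rw [norm_mul]
    have hk' : ε k ≠ 0 := (Finset.mem_filter.mp hk).2
    rcases hε.1 k with h | h | h
    · rw [h]; simp
    · exact absurd h hk'
    · rw [h]; simp
  -- cardinality of S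
  have hcard : S.card = 2 ^ ((j - ν₀) * d) := by
    have hpow : (2:ℕ) ^ j = 2 ^ (j - ν₀) * 2 ^ ν₀ := by
      rw [← pow_add, Nat.sub_add_cancel hν₀j]
    have hdiv : ∀ k : MorreyIdx d j, ∀ i : Fin d, (k i : ℕ) / 2 ^ ν₀ < 2 ^ (j - ν₀) := by
      intro k i
      apply Nat.div_lt_of_lt_mul
      calc (k i : ℕ) < 2 ^ j := (k i).isLt
        _ = 2 ^ ν₀ * 2 ^ (j - ν₀) := by rw [hpow, Nat.mul_comm]
    have hcardfun : Fintype.card (Fin d → Fin (2 ^ (j - ν₀))) = 2 ^ ((j - ν₀) * d) := by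
      simp [Fintype.card_fun, ← pow_mul]
    rw [← hcardfun, ← Finset.card_univ]
    apply Finset.card_bij
      (fun k _ => (fun i => (⟨(k i : ℕ) / 2 ^ ν₀, hdiv k i⟩ : Fin (2 ^ (j - ν₀)))))
    · intro a ha; exact Finset.mem_univ _
    · intro a ha b hb hab
      have ha' : ε a ≠ 0 := (Finset.mem_filter.mp ha).2
      have hb' : ε b ≠ 0 := (Finset.mem_filter.mp hb).2
      obtain ⟨k, hk, huniq⟩ :=
        hε.2 (fun i => (⟨(a i : ℕ) / 2 ^ ν₀, hdiv a i⟩ : Fin (2 ^ (j - ν₀))))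
      have hmema : memSubcube ν₀
          (fun i => (((⟨(a i : ℕ) / 2 ^ ν₀, hdiv a i⟩ : Fin (2 ^ (j - ν₀)))) : ℕ)) a :=
        fun i => rfl
      have hmemb : memSubcube ν₀
          (fun i => (((⟨(a i : ℕ) / 2 ^ ν₀, hdiv a i⟩ : Fin (2 ^ (j - ν₀)))) : ℕ)) b :=
        fun i => (congrArg Fin.val (congrFun hab i)).symm
      exact (huniq a ⟨hmema, ha'⟩).trans (huniq b ⟨hmemb, hb'⟩).symm
    · intro m _
      obtain ⟨k, ⟨hk1, hk2⟩, _⟩ := hε.2 m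
      refine ⟨k, Finset.mem_filter.mpr ⟨Finset.mem_univ _, hk2⟩, ?_⟩
      funext i
      exact Fin.ext (hk1 i)
  -- abbreviations
  set Sig : ℝ := ∑ k : MorreyIdx d j, ‖lam k‖ ^ p₁ with hSig
  have hSignn : 0 ≤ Sig := Finset.sum_nonneg fun k _ =>
    Real.rpow_nonneg (norm_nonneg _) _
  set M : ℝ := morreyNorm d j u₁ p₁ lam with hM
  set B : ℝ := ((j * d : ℕ) : ℝ) * (1 / u₁ - 1 / p₁) with hB
  -- Step 3 : Morrey norm lower bound
  have step3 : (2:ℝ) ^ B * Sig ^ (1/p₁) ≤ M := by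
    have hm0pos : 0 < 2 ^ (j - ((Fin.last j : Fin (j+1)) : ℕ)) :=
      pow_pos (by norm_num) _
    set m₀ : Fin d → Fin (2 ^ (j - ((Fin.last j : Fin (j+1)) : ℕ))) :=
      fun _ => ⟨0, hm0pos⟩ with hm₀
    have hsum_eq : (∑ k : MorreyIdx d j,
        if memSubcube ((Fin.last j : Fin (j+1)) : ℕ) (fun i => ((m₀ i : ℕ))) k
        then ‖lam k‖ ^ p₁ else 0) = Sig := by
      refine Finset.sum_congr rfl fun k _ => ?_
      rw [if_pos]
      intro i
      show (k i : ℕ) / 2 ^ ((Fin.last j : Fin (j+1)) : ℕ) = ((m₀ i : ℕ))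
      simp only [Fin.val_last, hm₀]
      exact Nat.div_eq_of_lt ((k i).isLt)
    have hterm : (2:ℝ) ^ B * Sig ^ (1/p₁) =
        (2 : ℝ) ^ (((((Fin.last j : Fin (j+1)) : ℕ) * d : ℕ) : ℝ) * (1 / u₁ - 1 / p₁)) *
          (∑ k : MorreyIdx d j,
            if memSubcube ((Fin.last j : Fin (j+1)) : ℕ) (fun i => (m₀ i : ℕ)) k
            then ‖lam k‖ ^ p₁ else 0) ^ (1 / p₁) := by
      rw [hsum_eq]
      simp only [Fin.val_last]
      rfl
    rw [hterm, hM]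
    unfold morreyNorm
    refine le_trans (le_ciSup (f := fun m : Fin d → Fin (2 ^ (j - ((Fin.last j : Fin (j+1)) : ℕ))) =>
        (2 : ℝ) ^ (((((Fin.last j : Fin (j+1)) : ℕ) * d : ℕ) : ℝ) * (1 / u₁ - 1 / p₁)) *
          (∑ k : MorreyIdx d j,
            if memSubcube ((Fin.last j : Fin (j+1)) : ℕ) (fun i => (m i : ℕ)) k
            then ‖lam k‖ ^ p₁ else 0) ^ (1 / p₁))
      (Set.Finite.bddAbove (Set.finite_range _)) m₀) ?_
    exact le_ciSup (f := fun ν : Fin (j+1) =>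
        ⨆ m : Fin d → Fin (2 ^ (j - (ν : ℕ))),
          (2 : ℝ) ^ ((((ν : ℕ) * d : ℕ) : ℝ) * (1 / u₁ - 1 / p₁)) *
            (∑ k : MorreyIdx d j,
              if memSubcube (ν : ℕ) (fun i => (m i : ℕ)) k
              then ‖lam k‖ ^ p₁ else 0) ^ (1 / p₁))
      (Set.Finite.bddAbove (Set.finite_range _)) (Fin.last j)
  have hMnn : 0 ≤ M := le_trans (by positivity) step3
  -- Step 2 : Hölder
  have step2 : ∑ k ∈ S, ‖lam k‖ ≤ ((S.card : ℝ)) ^ ((p₁-1)/p₁) * Sig ^ (1/p₁) := by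
    have hT : 0 ≤ ∑ k ∈ S, ‖lam k‖ := Finset.sum_nonneg fun _ _ => norm_nonneg _
    have hSsub : ∑ k ∈ S, ‖lam k‖ ^ p₁ ≤ Sig :=
      Finset.sum_le_sum_of_subset_of_nonneg (Finset.subset_univ S)
        (fun k _ _ => Real.rpow_nonneg (norm_nonneg _) _)
    have hold := Real.rpow_sum_le_const_mul_sum_rpow_of_nonneg (s := S)
      (f := fun k => ‖lam k‖) (p := p₁) hp₁.le (fun i _ => norm_nonneg _)
    have h1 : (∑ k ∈ S, ‖lam k‖) ^ p₁ ≤ (S.card : ℝ) ^ (p₁ - 1) * Sig :=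
      le_trans hold
        (mul_le_mul_of_nonneg_left hSsub (Real.rpow_nonneg (Nat.cast_nonneg _) _))
    calc ∑ k ∈ S, ‖lam k‖
        = ((∑ k ∈ S, ‖lam k‖) ^ p₁) ^ (1/p₁) := by
          rw [← Real.rpow_mul hT, mul_one_div, div_self hp₁pos.ne', Real.rpow_one]
      _ ≤ ((S.card : ℝ) ^ (p₁ - 1) * Sig) ^ (1/p₁) :=
          Real.rpow_le_rpow (Real.rpow_nonneg hT _) h1 (by positivity)
      _ = ((S.card : ℝ) ^ (p₁ - 1)) ^ (1/p₁) * Sig ^ (1/p₁) :=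
          Real.mul_rpow (Real.rpow_nonneg (Nat.cast_nonneg _) _) hSignn
      _ = (S.card : ℝ) ^ ((p₁-1)/p₁) * Sig ^ (1/p₁) := by
          rw [← Real.rpow_mul (Nat.cast_nonneg _), mul_one_div]
  -- exponent for card
  set A : ℝ := (((j - ν₀) * d : ℕ) : ℝ) * ((p₁-1)/p₁) with hA
  have hcardR : ((S.card : ℝ)) ^ ((p₁-1)/p₁) = (2:ℝ) ^ A := by
    rw [hcard, hA]
    rw [Nat.cast_pow, Nat.cast_ofNat, ← Real.rpow_natCast 2 ((j - ν₀) * d),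
      ← Real.rpow_mul (by norm_num)]
  -- from step3 : Sig^{1/p₁} ≤ 2^{-B} M
  have step3' : Sig ^ (1/p₁) ≤ (2:ℝ) ^ (-B) * M := by
    have hid : Sig ^ (1/p₁) = (2:ℝ)^(-B) * ((2:ℝ)^B * Sig ^ (1/p₁)) := by
      rw [← mul_assoc, ← Real.rpow_add two_pos, neg_add_cancel, Real.rpow_zero, one_mul]
    rw [hid]
    exact mul_le_mul_of_nonneg_left step3 (by positivity)
  -- Step 5 : exponent comparison
  have step5 : (2:ℝ)^A * (2:ℝ)^(-B) ≤
      (2:ℝ) ^ ((d:ℝ)/p₁) * (2 : ℝ) ^ (-(((ν₀ * d : ℕ) : ℝ))) *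
        (2 : ℝ) ^ (((j * d : ℕ) : ℝ) * (1 - 1 / u₁ + p₂ / (u₂ * p₁))) := by
    rw [← Real.rpow_add two_pos, ← Real.rpow_add two_pos, ← Real.rpow_add two_pos]
    apply Real.rpow_le_rpow_of_exponent_le one_le_two
    rw [hA, hB]
    have hc : (((j - ν₀) * d : ℕ) : ℝ) = ((j * d : ℕ) : ℝ) - ((ν₀ * d : ℕ) : ℝ) := by
      have : (j - ν₀) * d + ν₀ * d = j * d := by
        rw [← Nat.add_mul, Nat.sub_add_cancel hν₀j]
      have := congrArg (fun n : ℕ => (n : ℝ)) this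
      push_cast at this ⊢
      linarith
    rw [hc]
    have e1 : (p₁ - 1)/p₁ = 1 - 1/p₁ := by field_simp
    have h2 : ((ν₀ * d : ℕ) : ℝ) * (1/p₁) ≤ ((d:ℝ))*(1/p₁) +
        ((j * d : ℕ) : ℝ) * (p₂/(u₂*p₁)) := by
      have := mul_le_mul_of_nonneg_right hN (le_of_lt (by positivity : (0:ℝ) < 1/p₁))
      calc ((ν₀ * d : ℕ) : ℝ) * (1/p₁)
          ≤ (((j * d : ℕ) : ℝ) * p₂ / u₂ + d) * (1/p₁) := this
        _ = ((d:ℝ))*(1/p₁) + ((j * d : ℕ) : ℝ) * (p₂/(u₂*p₁)) := by ring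
      done
    rw [e1]
    ring_nf at h2 ⊢
    linarith [h2]
  -- final assembly
  calc ‖∑ k, ε k * lam k‖ ≤ ∑ k ∈ S, ‖lam k‖ := step1
    _ ≤ ((S.card : ℝ)) ^ ((p₁-1)/p₁) * Sig ^ (1/p₁) := step2
    _ = (2:ℝ)^A * Sig ^ (1/p₁) := by rw [hcardR]
    _ ≤ (2:ℝ)^A * ((2:ℝ)^(-B) * M) :=
        mul_le_mul_of_nonneg_left step3' (by positivity)
    _ = ((2:ℝ)^A * (2:ℝ)^(-B)) * M := by ring
    _ ≤ ((2:ℝ) ^ ((d:ℝ)/p₁) * (2 : ℝ) ^ (-(((ν₀ * d : ℕ) : ℝ))) *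
          (2 : ℝ) ^ (((j * d : ℕ) : ℝ) * (1 - 1 / u₁ + p₂ / (u₂ * p₁)))) * M :=
        mul_le_mul_of_nonneg_right step5 hMnn
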